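/- Let N be a sorting network with n levels. The contact graphs of all pseudoline arrangements supported by N induce the same partition of the vertex set {1,…,n} into connected components. -/

import Mathlib

open Finset
open scoped Classical Pointwise

namespace BrickP

/-! ### Networks and pseudoline arrangements

A network with `n` levels (labeled `0,…,n-1` from bottom to top) and `m` commutators
(labeled `0,…,m-1` from left to right) is encoded by a word `N : Fin m → Fin (n-1)`:
the `j`-th commutator joins levels `(N j).1` and `(N j).1 + 1`.
A pseudoline arrangement supported by `N` is encoded by its set `C` of crossings:
the word of adjacent transpositions read at the positions of `C` must be a reduced
expression of the longest element `w₀` of the symmetric group, i.e. its product is `w₀`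
and its length is `n.choose 2`.  The contacts are the commutators not in `C`. -/

/-- The adjacent transposition of `Fin n` exchanging the levels `i` and `i+1`. -/
def adjT (n : ℕ) (i : Fin (n - 1)) : Equiv.Perm (Fin n) :=
  Equiv.swap ⟨i.1, by have := i.2; omega⟩ ⟨i.1 + 1, by have := i.2; omega⟩

/-- The longest element of the symmetric group on `Fin n`: the order-reversing permutation. -/
def w0 (n : ℕ) : Equiv.Perm (Fin n) := Fin.revPerm

/-- `C` is the crossing set of a pseudoline arrangement supported by the network `N`. -/
def IsArr (n : ℕ) {m : ℕ} (N : Fin m → Fin (n - 1)) (C : Finset (Fin m)) : Prop :=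
  C.card = n.choose 2 ∧
    (((List.finRange m).filter (fun j => j ∈ C)).map (fun j => adjT n (N j))).prod = w0 n

instance (n : ℕ) {m : ℕ} (N : Fin m → Fin (n - 1)) : DecidablePred (IsArr n N) := fun C => by
  unfold IsArr; infer_instance

/-- `statePerm n N C t i` is the level occupied by the `i`-th pseudoline of the arrangement
with crossing set `C` after the first `t` commutators of the network `N`. -/
def statePerm (n : ℕ) {m : ℕ} (N : Fin m → Fin (n - 1)) (C : Finset (Fin m)) :
    ℕ → Equiv.Perm (Fin n)
  | 0 => 1
  | t + 1 =>
    (if h : t < m then (if (⟨t, h⟩ : Fin m) ∈ C then adjT n (N ⟨t, h⟩) else 1) else 1) *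
      statePerm n N C t

/-- The `j`-th commutator has another commutator at the same level gap to its right;
the brick of the network associated to `j` is the bounded cell whose left wall is `j`. -/
def IsBrick {n m : ℕ} (N : Fin m → Fin (n - 1)) (j : Fin m) : Prop :=
  ∃ j' : Fin m, j < j' ∧ N j' = N j

instance {n m : ℕ} (N : Fin m → Fin (n - 1)) : DecidablePred (IsBrick N) := fun j => by
  unfold IsBrick; infer_instance

/-- The `i`-th pseudoline of the arrangement `C` passes above the brick with left wall `j`
(equivalently, above the commutator `j`). -/
def Above (n : ℕ) {m : ℕ} (N : Fin m → Fin (n - 1)) (C : Finset (Fin m))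
    (i : Fin n) (j : Fin m) : Prop :=
  (N j).1 < (statePerm n N C (j.1 + 1) i).1

instance (n : ℕ) {m : ℕ} (N : Fin m → Fin (n - 1)) (C : Finset (Fin m)) (i : Fin n) (j : Fin m) :
    Decidable (Above n N C i j) := by unfold Above; infer_instance

/-- The brick vector of an arrangement: its `i`-th coordinate is the number of bricks of the
network lying below the `i`-th pseudoline. -/
noncomputable def brickVector (n : ℕ) {m : ℕ} (N : Fin m → Fin (n - 1)) (C : Finset (Fin m)) :
    Fin n → ℝ :=
  fun i => ((univ.filter (fun j : Fin m => IsBrick N j ∧ Above n N C i j)).card : ℝ)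

/-- The brick polytope of a network: the convex hull of the brick vectors of all pseudoline
arrangements supported by it. -/
noncomputable def brickPolytope (n : ℕ) {m : ℕ} (N : Fin m → Fin (n - 1)) : Set (Fin n → ℝ) :=
  convexHull ℝ {x | ∃ C, IsArr n N C ∧ brickVector n N C = x}

/-! ### The contact graph -/

/-- The source of the arc of the contact graph associated to the contact `j`:
the pseudoline passing above the contact. -/
def arcSrc (n : ℕ) {m : ℕ} (N : Fin m → Fin (n - 1)) (C : Finset (Fin m)) (j : Fin m) : Fin n :=
  (statePerm n N C (j.1 + 1))⁻¹ ⟨(N j).1 + 1, by have := (N j).2; omega⟩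

/-- The target of the arc of the contact graph associated to the contact `j`:
the pseudoline passing below the contact. -/
def arcTgt (n : ℕ) {m : ℕ} (N : Fin m → Fin (n - 1)) (C : Finset (Fin m)) (j : Fin m) : Fin n :=
  (statePerm n N C (j.1 + 1))⁻¹ ⟨(N j).1, by have := (N j).2; omega⟩

/-- The contact graph of an arrangement, as the multiset of its arcs (a directed multigraph
on the vertex set `Fin n`). -/
def contactMG (n : ℕ) {m : ℕ} (N : Fin m → Fin (n - 1)) (C : Finset (Fin m)) :
    Multiset (Fin n × Fin n) :=
  (univ.filter (fun j : Fin m => j ∉ C)).val.map (fun j => (arcSrc n N C j, arcTgt n N C j))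

/-- There is an arc from `a` to `b` in the contact graph of the arrangement `C`. -/
def ArcRel (n : ℕ) {m : ℕ} (N : Fin m → Fin (n - 1)) (C : Finset (Fin m)) (a b : Fin n) : Prop :=
  ∃ j : Fin m, j ∉ C ∧ arcSrc n N C j = a ∧ arcTgt n N C j = b

/-- `a` and `b` lie in the same connected component of the contact graph of `C`. -/
def ConnRel (n : ℕ) {m : ℕ} (N : Fin m → Fin (n - 1)) (C : Finset (Fin m)) (a b : Fin n) : Prop :=
  Relation.ReflTransGen (fun u v => ArcRel n N C u v ∨ ArcRel n N C v u) a b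

/-- A network is irreducible when the contact graphs of all supported arrangements
are connected. -/
def Irreducible (n : ℕ) {m : ℕ} (N : Fin m → Fin (n - 1)) : Prop :=
  ∀ C, IsArr n N C → ∀ a b : Fin n, ConnRel n N C a b

/-- The contact graph of the arrangement `C` is an acyclic directed multigraph. -/
def AcyclicArcs (n : ℕ) {m : ℕ} (N : Fin m → Fin (n - 1)) (C : Finset (Fin m)) : Prop :=
  ∀ a : Fin n, ¬ Relation.TransGen (ArcRel n N C) a a

/-! ### Polyhedral notions -/

/-- Dimension of a subset of `ℝⁿ`: the rank of the direction of its affine span. -/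
noncomputable def dimOf {n : ℕ} (s : Set (Fin n → ℝ)) : ℕ :=
  Module.finrank ℝ (affineSpan ℝ s).direction

/-- The cone positively spanned by a set of vectors. -/
def coneOf {n : ℕ} (S : Set (Fin n → ℝ)) : Set (Fin n → ℝ) :=
  {x | ∃ (k : ℕ) (c : Fin k → ℝ) (v : Fin k → Fin n → ℝ),
      (∀ i, 0 ≤ c i) ∧ (∀ i, v i ∈ S) ∧ x = ∑ i, c i • v i}

/-- Standard scalar product on `Fin n → ℝ`. -/
def dotp {n : ℕ} (u x : Fin n → ℝ) : ℝ := ∑ i, u i * x i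

/-- The face of `P` minimizing the linear form `⟨u, ·⟩`. -/
def minFace {n : ℕ} (P : Set (Fin n → ℝ)) (u : Fin n → ℝ) : Set (Fin n → ℝ) :=
  {x | x ∈ P ∧ ∀ y ∈ P, dotp u x ≤ dotp u y}

/-- `u` is a normal vector of a facet of `P` (facet = face of codimension 1), with the
convention that the facet is the subset of `P` minimizing `⟨u, ·⟩`. -/
def IsFacetNormal {n : ℕ} (P : Set (Fin n → ℝ)) (u : Fin n → ℝ) : Prop :=
  u ≠ 0 ∧ (minFace P u).Nonempty ∧ dimOf (minFace P u) + 1 = dimOf P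

/-- `F` is a nonempty face of dimension `k` of the convex set `P`. -/
def IsKFace {n : ℕ} (P : Set (Fin n → ℝ)) (k : ℕ) (F : Set (Fin n → ℝ)) : Prop :=
  IsExtreme ℝ P F ∧ Convex ℝ F ∧ F.Nonempty ∧ dimOf F = k

/-- The characteristic vector of a subset of coordinates. -/
def charVec {n : ℕ} (V : Finset (Fin n)) : Fin n → ℝ := fun i => if i ∈ V then 1 else 0

/-! ### Directed cuts -/

/-- The arcs of the contact graph of `C` crossing the vertex partition `(Vᶜ, V)`. -/
def cutArcs (n : ℕ) {m : ℕ} (N : Fin m → Fin (n - 1)) (C : Finset (Fin m)) (V : Finset (Fin n)) :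
    Set (Fin n × Fin n) :=
  {p | ArcRel n N C p.1 p.2 ∧ ((p.1 ∈ V ∧ p.2 ∉ V) ∨ (p.1 ∉ V ∧ p.2 ∈ V))}

/-- `(Vᶜ, V)` is a minimal directed cut of the contact graph of `C`, with sink set `V`:
all crossing arcs are directed towards `V` and the set of crossing arcs is
inclusion-minimal among edge cuts. -/
def MinDirCut (n : ℕ) {m : ℕ} (N : Fin m → Fin (n - 1)) (C : Finset (Fin m))
    (V : Finset (Fin n)) : Prop :=
  V.Nonempty ∧ V ≠ univ ∧ (∀ a b, ArcRel n N C a b → ¬(a ∈ V ∧ b ∉ V)) ∧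
    ∀ W : Finset (Fin n), W.Nonempty → W ≠ univ →
      cutArcs n N C W ⊆ cutArcs n N C V → cutArcs n N C W = cutArcs n N C V

/-! ### The simplicial complex `Δ(N)` and the face maps `Φ`, `Ψ` -/

/-- `γ` is a face of the simplicial complex `Δ(N)`: the network obtained by erasing the
commutators of `γ` is still sorting, i.e. some supported arrangement has all of `γ`
among its contacts. -/
def IsFaceOfCplx (n : ℕ) {m : ℕ} (N : Fin m → Fin (n - 1)) (γ : Finset (Fin m)) : Prop :=
  ∃ C, IsArr n N C ∧ Disjoint γ C

/-- `Φ` associates to `X ⊆ ℝⁿ` the set of commutators of `N` which are contacts in all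
supported arrangements whose brick vector lies in `X`. -/
def PhiMap (n : ℕ) {m : ℕ} (N : Fin m → Fin (n - 1)) (X : Set (Fin n → ℝ)) : Set (Fin m) :=
  {j | ∀ C, IsArr n N C → brickVector n N C ∈ X → j ∉ C}

/-- `Ψ` associates to a set `γ` of commutators of `N` the convex hull of the brick vectors
of the arrangements of `Arr(N|γ)`, i.e. whose contacts contain `γ`. -/
noncomputable def PsiMap (n : ℕ) {m : ℕ} (N : Fin m → Fin (n - 1)) (γ : Set (Fin m)) :
    Set (Fin n → ℝ) :=
  convexHull ℝ {x | ∃ C, IsArr n N C ∧ (∀ j ∈ γ, j ∉ C) ∧ brickVector n N C = x}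

/-- Same component relation in the contact graph of `C` with the arcs of `γ` removed. -/
def ConnRelAvoid (n : ℕ) {m : ℕ} (N : Fin m → Fin (n - 1)) (C : Finset (Fin m))
    (γ : Set (Fin m)) (a b : Fin n) : Prop :=
  Relation.ReflTransGen
    (fun u v =>
      (∃ j : Fin m, j ∉ C ∧ j ∉ γ ∧ arcSrc n N C j = u ∧ arcTgt n N C j = v) ∨
      (∃ j : Fin m, j ∉ C ∧ j ∉ γ ∧ arcSrc n N C j = v ∧ arcTgt n N C j = u)) a b

/-- One step of the quotient multigraph `Λ^#/(Λ^#∖γ^#)`: an arc of `γ^#` between the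
components of `a` and `b` in `Λ^#∖γ^#`. -/
def QStep (n : ℕ) {m : ℕ} (N : Fin m → Fin (n - 1)) (C : Finset (Fin m)) (γ : Set (Fin m))
    (a b : Fin n) : Prop :=
  ∃ a' b' : Fin n, ConnRelAvoid n N C γ a a' ∧
    (∃ j : Fin m, j ∉ C ∧ j ∈ γ ∧ arcSrc n N C j = a' ∧ arcTgt n N C j = b') ∧
    ConnRelAvoid n N C γ b' b

/-- A set `γ` of commutators of `N` is `k`-admissible. -/
def KAdmissible (n : ℕ) {m : ℕ} (N : Fin m → Fin (n - 1)) (γ : Set (Fin m)) (k : ℕ) : Prop :=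
  ∃ C, IsArr n N C ∧ (∀ j ∈ γ, j ∉ C) ∧
    {S : Set (Fin n) | ∃ a, S = {b | ConnRelAvoid n N C γ a b}}.ncard = n - k ∧
    ∀ a, ¬ Relation.TransGen (QStep n N C γ) a a

/-! ### Restrictions of networks -/

/-- The pseudoline of the arrangement `C` entering the commutator `j` from below. -/
def pLow (n : ℕ) {m : ℕ} (N : Fin m → Fin (n - 1)) (C : Finset (Fin m)) (j : Fin m) : Fin n :=
  (statePerm n N C j.1)⁻¹ ⟨(N j).1, by have := (N j).2; omega⟩

/-- The pseudoline of the arrangement `C` entering the commutator `j` from above. -/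
def pHigh (n : ℕ) {m : ℕ} (N : Fin m → Fin (n - 1)) (C : Finset (Fin m)) (j : Fin m) : Fin n :=
  (statePerm n N C j.1)⁻¹ ⟨(N j).1 + 1, by have := (N j).2; omega⟩

/-- `U` is a connected component of the contact graph of the arrangement `C`. -/
def IsComp (n : ℕ) {m : ℕ} (N : Fin m → Fin (n - 1)) (C : Finset (Fin m))
    (U : Finset (Fin n)) : Prop :=
  ∃ a : Fin n, U = univ.filter (fun b => ConnRel n N C a b)

/-- The commutators of `N` whose two incident pseudolines (w.r.t. the arrangement `C`)
both belong to `U`. -/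
def commsIn (n : ℕ) {m : ℕ} (N : Fin m → Fin (n - 1)) (C : Finset (Fin m))
    (U : Finset (Fin n)) : Finset (Fin m) :=
  univ.filter (fun j => pLow n N C j ∈ U ∧ pHigh n N C j ∈ U)

/-- The restriction of the network `N` to the curves of the pseudolines of `U`
(w.r.t. the arrangement `C`): it has `U.card` levels, its commutators are those of
`commsIn n N C U` in left-right order, and the level of such a commutator is the number
of curves of `U` passing below it. -/
noncomputable def restNet (n : ℕ) {m : ℕ} (N : Fin m → Fin (n - 1)) (C : Finset (Fin m))
    (U : Finset (Fin n)) (j' : Fin (commsIn n N C U).card) : Fin (U.card - 1) := by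
  refine ⟨(U.filter (fun u =>
      (statePerm n N C (((commsIn n N C U).orderIsoOfFin rfl j').1).1 u).1 <
        (N ((commsIn n N C U).orderIsoOfFin rfl j').1).1)).card, ?_⟩
  set j : Fin m := ((commsIn n N C U).orderIsoOfFin rfl j').1 with hj
  have hmem : j ∈ commsIn n N C U := ((commsIn n N C U).orderIsoOfFin rfl j').2
  rw [commsIn, Finset.mem_filter] at hmem
  obtain ⟨-, hL, hH⟩ := hmem
  have hlowlvl : (statePerm n N C j.1 (pLow n N C j)).1 = (N j).1 := by
    unfold pLow; rw [Equiv.Perm.inv_def, Equiv.apply_symm_apply]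
  have hhighlvl : (statePerm n N C j.1 (pHigh n N C j)).1 = (N j).1 + 1 := by
    unfold pHigh; rw [Equiv.Perm.inv_def, Equiv.apply_symm_apply]
  have hne : pLow n N C j ≠ pHigh n N C j := by
    intro h; rw [h, hhighlvl] at hlowlvl; omega
  have hsub : U.filter (fun u => (statePerm n N C j.1 u).1 < (N j).1)
      ⊆ (U.erase (pLow n N C j)).erase (pHigh n N C j) := by
    intro u hu
    rw [Finset.mem_filter] at hu
    rw [Finset.mem_erase, Finset.mem_erase]
    refine ⟨fun h => ?_, fun h => ?_, hu.1⟩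
    · rw [h] at hu; omega
    · rw [h] at hu; omega
  have hcard := Finset.card_le_card hsub
  rw [Finset.card_erase_of_mem (Finset.mem_erase.mpr ⟨hne.symm, hH⟩),
    Finset.card_erase_of_mem hL] at hcard
  have hU2 : 2 ≤ U.card := Finset.one_lt_card.mpr ⟨_, hL, _, hH, hne⟩
  omega

/-- The indices, in the restricted network, of the commutators of `γ` belonging to the
restriction. -/
def restIdx (n : ℕ) {m : ℕ} (N : Fin m → Fin (n - 1)) (C : Finset (Fin m)) (U : Finset (Fin n))
    (γ : Finset (Fin m)) : Finset (Fin (commsIn n N C U).card) :=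
  univ.filter (fun j' => ((commsIn n N C U).orderIsoOfFin rfl j').1 ∈ γ)


/-! ### Kernels of networks, alternating networks, and the polygon of a word -/

/-- The commutators of `N` surviving in the `k`-kernel of `N` (obtained by erasing the
first `k` and last `k` levels together with all commutators incident to them). -/
def kernelComms (n : ℕ) {m : ℕ} (N : Fin m → Fin (n - 1)) (k : ℕ) : Finset (Fin m) :=
  univ.filter (fun j => k ≤ (N j).1 ∧ (N j).1 + k < n - 1)

/-- The `k`-kernel of the network `N`: a network with `n - 2k` levels. -/
def kernelNet (n : ℕ) {m : ℕ} (N : Fin m → Fin (n - 1)) (k : ℕ) :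
    Fin (kernelComms n N k).card → Fin (n - 2 * k - 1) :=
  fun j' => ⟨(N ((kernelComms n N k).orderIsoOfFin rfl j').1).1 - k, by
    have h := ((kernelComms n N k).orderIsoOfFin rfl j').2
    have h2 := (Finset.mem_filter.mp h).2
    omega⟩

/-- The commutator `j` is adjacent to the level `ℓ`. -/
def Touches {n m : ℕ} (N : Fin m → Fin (n - 1)) (ℓ : ℕ) (j : Fin m) : Prop :=
  (N j).1 = ℓ ∨ (N j).1 + 1 = ℓ

/-- The network `N` is alternating: the commutators adjacent to each intermediate level are
alternatively located above and below it. -/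
def IsAlternating {n m : ℕ} (N : Fin m → Fin (n - 1)) : Prop :=
  ∀ ℓ : ℕ, 0 < ℓ → ℓ + 1 < n → ∀ j j' : Fin m, j < j' →
    Touches N ℓ j → Touches N ℓ j' → (∀ j'', j < j'' → j'' < j' → ¬ Touches N ℓ j'') →
    N j ≠ N j'

/-- The `i`-th pseudoline of the arrangement `C` touches the level `ℓ` somewhere. -/
def TouchesLevel (n : ℕ) {m : ℕ} (N : Fin m → Fin (n - 1)) (C : Finset (Fin m))
    (i : Fin n) (ℓ : ℕ) : Prop :=
  ∃ t, t ≤ m ∧ (statePerm n N C t i).1 = ℓ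

/-- `M` is the reduced alternating sorting network `N_x` associated to the word
`x ∈ {a,b}^{n-2}` (where `a` is encoded by `true` and `b` by `false`): it is reduced
(it has `n.choose 2` commutators, all of which are crossings of its unique supported
pseudoline arrangement), alternating, and for each `i` its `(i+1)`-st pseudoline touches
the top level if `x i = a` and the bottom level if `x i = b`. -/
def IsNetworkOfWord (n : ℕ) {m : ℕ} (M : Fin m → Fin (n - 1)) (x : Fin (n - 2) → Bool) : Prop :=
  m = n.choose 2 ∧ IsArr n M Finset.univ ∧ IsAlternating M ∧
    ∀ i : Fin (n - 2),
      (x i = true →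
        TouchesLevel n M Finset.univ ⟨i.1 + 1, by have := i.2; omega⟩ (n - 1)) ∧
      (x i = false →
        TouchesLevel n M Finset.univ ⟨i.1 + 1, by have := i.2; omega⟩ 0)

/-- The position of the vertex `v` of the polygon `P_x` in the cyclic (counterclockwise)
order along the boundary of `P_x`: first `p_1`, then the vertices below the horizontal
axis from left to right, then `p_n`, then the vertices above the axis from right to left. -/
def cpos (n : ℕ) (x : Fin (n - 2) → Bool) (v : Fin n) : ℕ :=
  if v.1 = 0 then 0
  else if v.1 = n - 1 then (univ.filter (fun i : Fin (n - 2) => x i = false)).card + 1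
  else if h : v.1 = 0 ∨ v.1 = n - 1 then 0
  else if x ⟨v.1 - 1, by have := v.2; omega⟩ = false then
    (univ.filter (fun i : Fin (n - 2) => i.1 < v.1 - 1 ∧ x i = false)).card + 1
  else
    (univ.filter (fun i : Fin (n - 2) => x i = false)).card + 2 +
      (univ.filter (fun i : Fin (n - 2) => v.1 - 1 < i.1 ∧ x i = true)).card

/-- `c` lies strictly between `a` and `b`. -/
def Btw (a b c : ℕ) : Prop := min a b < c ∧ c < max a b

/-- The diagonals `d` and `e` of the polygon `P_x` cross (in their interior): exactly one
endpoint of `e` lies on each side of `d`. -/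
def CrossesIn (n : ℕ) (x : Fin (n - 2) → Bool) (d e : Fin n × Fin n) : Prop :=
  (Btw (cpos n x d.1) (cpos n x d.2) (cpos n x e.1) ∧
      ¬ Btw (cpos n x d.1) (cpos n x d.2) (cpos n x e.2)) ∨
  (¬ Btw (cpos n x d.1) (cpos n x d.2) (cpos n x e.1) ∧
      Btw (cpos n x d.1) (cpos n x d.2) (cpos n x e.2))

/-- `d` is an internal diagonal of the polygon `P_x`: its endpoints are distinct and
non-consecutive on the boundary. -/
def IsInternal (n : ℕ) (x : Fin (n - 2) → Bool) (d : Fin n × Fin n) : Prop :=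
  d.1 ≠ d.2 ∧ (cpos n x d.1 + 1) % n ≠ cpos n x d.2 ∧ (cpos n x d.2 + 1) % n ≠ cpos n x d.1

/-- The label of the commutator `j` of a reduced network: the pair of indices of the two
pseudolines of the unique supported arrangement which cross at `j` (smallest first). -/
def commLabel (n : ℕ) {m : ℕ} (M : Fin m → Fin (n - 1)) (j : Fin m) : Fin n × Fin n :=
  (pLow n M Finset.univ j, pHigh n M Finset.univ j)

/-! ### Multitriangulations: valid sequences and the sets `D(σ)` -/

/-- The sequence `0^k σ 0^k ∈ {0,1}^n` obtained by appending `k` zeros before and after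
`σ ∈ {0,1}^(n-2k)` (`1` is encoded by `true` and `0` by `false`). -/
def extSeq (n k : ℕ) (σ : Fin (n - 2 * k) → Bool) (t : Fin n) : Bool :=
  if h : k ≤ t.1 ∧ t.1 < k + (n - 2 * k) then σ ⟨t.1 - k, by omega⟩ else false

/-- The positions of the zeros of the extended sequence `0^k σ 0^k`. -/
def zeroSet (n k : ℕ) (σ : Fin (n - 2 * k) → Bool) : Finset (Fin n) :=
  univ.filter (fun t => extSeq n k σ t = false)

/-- The set `D(σ)` of edges `[ζ_i(σ), ζ_{i+k}(σ)]` of the `n`-gon, where `ζ_i(σ)` denotes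
the position of the `i`-th zero of `0^k σ 0^k`. -/
def DsetP (n k : ℕ) (σ : Fin (n - 2 * k) → Bool) (p : Fin n × Fin n) : Prop :=
  ∃ i : Fin (zeroSet n k σ).card, ∃ hik : i.1 + k < (zeroSet n k σ).card,
    p = (((zeroSet n k σ).orderIsoOfFin rfl i).1,
         ((zeroSet n k σ).orderIsoOfFin rfl ⟨i.1 + k, hik⟩).1)

/-- A sequence of `{0,1}^q` is `k`-valid if it is neither `0^q` nor `1^q` and contains no
factor `1 0^r 1` with `r ≥ k`. -/
def KValid (q k : ℕ) (σ : Fin q → Bool) : Prop :=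
  (∃ i, σ i = true) ∧ (∃ i, σ i = false) ∧
    ¬ ∃ i j : Fin q, i < j ∧ σ i = true ∧ σ j = true ∧
        (∀ t, i < t → t < j → σ t = false) ∧ k ≤ j.1 - i.1 - 1

/-! ### The simplicial complex `Δ_n^k` of multitriangulations -/

/-- `p` encodes a `k`-relevant diagonal of a convex `q`-gon with vertices `0,…,q-1` in
cyclic order: it has at least `k` vertices of the polygon (strictly) on each side. -/
def IsRelevantDiag (q k : ℕ) (p : Fin q × Fin q) : Prop :=
  p.1.1 < p.2.1 ∧ p.1.1 + k + 1 ≤ p.2.1 ∧ k + p.2.1 + 1 ≤ q + p.1.1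

/-- Two diagonals of the convex `q`-gon cross. -/
def DiagCross {q : ℕ} (p e : Fin q × Fin q) : Prop :=
  (p.1.1 < e.1.1 ∧ e.1.1 < p.2.1 ∧ p.2.1 < e.2.1) ∨
  (e.1.1 < p.1.1 ∧ p.1.1 < e.2.1 ∧ e.2.1 < p.2.1)

/-- `γ` is a face of the simplicial complex `Δ_q^k`: a `(k+1)`-crossing-free set of
`k`-relevant diagonals of the convex `q`-gon. -/
def IsFaceDelta (q k : ℕ) (γ : Finset (Fin q × Fin q)) : Prop :=
  (∀ p ∈ γ, IsRelevantDiag q k p) ∧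
    ∀ S ⊆ γ, S.card = k + 1 → ¬ (∀ p ∈ S, ∀ e ∈ S, p ≠ e → DiagCross p e)


/-! ### Auxiliary development for Statement 3 -/

section Aux3

variable {n m : ℕ}

/-- The lower level of commutator `j`, as an element of `Fin n`. -/
def lvlA (n : ℕ) {m : ℕ} (N : Fin m → Fin (n - 1)) (j : Fin m) : Fin n :=
  ⟨(N j).1, by have := (N j).2; omega⟩

/-- The upper level of commutator `j`, as an element of `Fin n`. -/
def lvlB (n : ℕ) {m : ℕ} (N : Fin m → Fin (n - 1)) (j : Fin m) : Fin n :=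
  ⟨(N j).1 + 1, by have := (N j).2; omega⟩

lemma adjT_eq_swap (N : Fin m → Fin (n - 1)) (j : Fin m) :
    adjT n (N j) = Equiv.swap (lvlA n N j) (lvlB n N j) := rfl

lemma statePerm_zero (N : Fin m → Fin (n - 1)) (C : Finset (Fin m)) :
    statePerm n N C 0 = 1 := rfl

lemma statePerm_succ (N : Fin m → Fin (n - 1)) (C : Finset (Fin m)) (t : ℕ) :
    statePerm n N C (t + 1) =
      (if h : t < m then (if (⟨t, h⟩ : Fin m) ∈ C then adjT n (N ⟨t, h⟩) else 1) else 1) *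
        statePerm n N C t := rfl

lemma statePerm_succ_of_not_mem {N : Fin m → Fin (n - 1)} {C : Finset (Fin m)} {j : Fin m}
    (hj : j ∉ C) : statePerm n N C (j.1 + 1) = statePerm n N C j.1 := by
  rw [statePerm_succ, dif_pos j.2]
  simp [Fin.eta, hj]

lemma statePerm_succ_of_mem {N : Fin m → Fin (n - 1)} {C : Finset (Fin m)} {j : Fin m}
    (hj : j ∈ C) : statePerm n N C (j.1 + 1) =
      Equiv.swap (lvlA n N j) (lvlB n N j) * statePerm n N C j.1 := by
  rw [statePerm_succ, dif_pos j.2]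
  simp [Fin.eta, hj, adjT_eq_swap]

lemma statePerm_congr {N : Fin m → Fin (n - 1)} (C C' : Finset (Fin m)) (t : ℕ)
    (h : ∀ p : Fin m, p.1 < t → (p ∈ C ↔ p ∈ C')) :
    statePerm n N C t = statePerm n N C' t := by
  induction t with
  | zero => rfl
  | succ t ih =>
    rw [statePerm_succ, statePerm_succ, ih (fun p hp => h p (by omega))]
    congr 1
    rcases Nat.lt_or_ge t m with ht | ht
    · rw [dif_pos ht, dif_pos ht, if_congr (h ⟨t, ht⟩ (Nat.lt_succ_self t)) rfl rfl]
    · rw [dif_neg (by omega), dif_neg (by omega)]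

/-- The `k`-th factor of the product of an arrangement. -/
def gfac (n : ℕ) {m : ℕ} (N : Fin m → Fin (n - 1)) (C : Finset (Fin m)) (k : ℕ) :
    Equiv.Perm (Fin n) :=
  if h : k < m then (if (⟨k, h⟩ : Fin m) ∈ C then adjT n (N ⟨k, h⟩) else 1) else 1

lemma gfac_inv (N : Fin m → Fin (n - 1)) (C : Finset (Fin m)) (k : ℕ) :
    (gfac n N C k)⁻¹ = gfac n N C k := by
  unfold gfac
  split
  · split
    · unfold adjT; exact Equiv.swap_inv _ _
    · exact inv_one
  · exact inv_one

lemma statePerm_eq_prodInv (N : Fin m → Fin (n - 1)) (C : Finset (Fin m)) (t : ℕ) :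
    statePerm n N C t = (((List.range t).map (gfac n N C)).prod)⁻¹ := by
  induction t with
  | zero => simp [statePerm_zero]
  | succ t ih =>
    rw [List.range_succ, List.map_append, List.prod_append, statePerm_succ, ih]
    show gfac n N C t * _ = _
    simp [mul_inv_rev, gfac_inv]

lemma filter_map_prod_eq {α M : Type*} [Monoid M] (p : α → Prop) [DecidablePred p] (f : α → M) :
    ∀ l : List α,
      ((l.filter (fun a => p a)).map f).prod = (l.map (fun a => if p a then f a else 1)).prod := by
  intro l
  induction l with
  | nil => rfl
  | cons a l ih =>
    by_cases h : p a <;> simp [List.filter_cons, h, ih]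

lemma map_finRange_gfac (N : Fin m → Fin (n - 1)) (C : Finset (Fin m)) :
    ((List.finRange m).map (fun j => if j ∈ C then adjT n (N j) else 1)) =
      (List.range m).map (gfac n N C) := by
  apply List.ext_getElem
  · simp
  · intro i h1 h2
    have him : i < m := by simpa using h1
    simp [gfac, him]

lemma w0_inv : (w0 n)⁻¹ = w0 n := by
  show (Fin.revPerm)⁻¹ = (Fin.revPerm : Equiv.Perm (Fin n))
  rw [Equiv.Perm.inv_def, Fin.revPerm_symm]

lemma isArr_iff_state (N : Fin m → Fin (n - 1)) (C : Finset (Fin m)) :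
    IsArr n N C ↔ (C.card = n.choose 2 ∧ statePerm n N C m = w0 n) := by
  unfold IsArr
  have hp : (((List.finRange m).filter (fun j => j ∈ C)).map (fun j => adjT n (N j))).prod =
      (statePerm n N C m)⁻¹ := by
    rw [filter_map_prod_eq (fun j => j ∈ C) (fun j => adjT n (N j)) (List.finRange m),
      map_finRange_gfac, statePerm_eq_prodInv, inv_inv]
  rw [hp, inv_eq_iff_eq_inv, w0_inv]

lemma pLow_def (N : Fin m → Fin (n - 1)) (C : Finset (Fin m)) (j : Fin m) :
    pLow n N C j = (statePerm n N C j.1)⁻¹ (lvlA n N j) := rfl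

lemma pHigh_def (N : Fin m → Fin (n - 1)) (C : Finset (Fin m)) (j : Fin m) :
    pHigh n N C j = (statePerm n N C j.1)⁻¹ (lvlB n N j) := rfl

lemma pLow_ne_pHigh (N : Fin m → Fin (n - 1)) (C : Finset (Fin m)) (j : Fin m) :
    pLow n N C j ≠ pHigh n N C j := by
  intro h
  rw [pLow_def, pHigh_def] at h
  have := (Equiv.injective _) h
  have h2 : (lvlA n N j).1 = (lvlB n N j).1 := by rw [this]
  simp [lvlA, lvlB] at h2

/-- The pseudolines `a` and `b` cross at commutator `j` in the arrangement `C`. -/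
def CrossAt (n : ℕ) {m : ℕ} (N : Fin m → Fin (n - 1)) (C : Finset (Fin m)) (j : Fin m)
    (a b : Fin n) : Prop :=
  j ∈ C ∧ ((pLow n N C j = a ∧ pHigh n N C j = b) ∨ (pLow n N C j = b ∧ pHigh n N C j = a))

lemma swap_val_lt {p q x y : Fin n} (hpq : p.1 + 1 = q.1)
    (h1 : ¬(x = p ∧ y = q)) (h2 : ¬(x = q ∧ y = p)) :
    ((Equiv.swap p q x).1 < (Equiv.swap p q y).1 ↔ x.1 < y.1) := by
  simp only [Equiv.swap_apply_def]
  split_ifs <;> simp_all [Fin.ext_iff] <;> omega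

lemma noCross_lt {N : Fin m → Fin (n - 1)} {C : Finset (Fin m)} (a b : Fin n) :
    ∀ t, t ≤ m → (∀ j : Fin m, j.1 < t → ¬ CrossAt n N C j a b) →
      ((statePerm n N C t a).1 < (statePerm n N C t b).1 ↔ a.1 < b.1) := by
  intro t
  induction t with
  | zero => intro _ _; simp [statePerm_zero]
  | succ t ih =>
    intro htm hcr
    have ht : t < m := by omega
    have ihr := ih (by omega) (fun p hp => hcr p (by omega))
    by_cases hjC : (⟨t, ht⟩ : Fin m) ∈ C
    · have hs : statePerm n N C (t + 1) =
          Equiv.swap (lvlA n N ⟨t, ht⟩) (lvlB n N ⟨t, ht⟩) * statePerm n N C t :=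
        statePerm_succ_of_mem hjC
      rw [hs]
      simp only [Equiv.Perm.mul_apply]
      have hnc := hcr ⟨t, ht⟩ (Nat.lt_succ_self t)
      rw [CrossAt] at hnc
      have hor : ¬((pLow n N C ⟨t, ht⟩ = a ∧ pHigh n N C ⟨t, ht⟩ = b) ∨
          (pLow n N C ⟨t, ht⟩ = b ∧ pHigh n N C ⟨t, ht⟩ = a)) := fun h => hnc ⟨hjC, h⟩
      rw [not_or] at hor
      refine (swap_val_lt (by simp [lvlA, lvlB]) ?_ ?_).trans ihr
      · rintro ⟨hxa, hyb⟩
        exact hor.1 ⟨by rw [pLow_def, ← hxa, Equiv.Perm.inv_def, Equiv.symm_apply_apply],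
          by rw [pHigh_def, ← hyb, Equiv.Perm.inv_def, Equiv.symm_apply_apply]⟩
      · rintro ⟨hxa, hyb⟩
        exact hor.2 ⟨by rw [pLow_def, ← hyb, Equiv.Perm.inv_def, Equiv.symm_apply_apply],
          by rw [pHigh_def, ← hxa, Equiv.Perm.inv_def, Equiv.symm_apply_apply]⟩
    · rw [show (t + 1 : ℕ) = (⟨t, ht⟩ : Fin m).1 + 1 from rfl, statePerm_succ_of_not_mem hjC]
      exact ihr

lemma exists_cross {N : Fin m → Fin (n - 1)} {C : Finset (Fin m)} (hC : IsArr n N C)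
    {a b : Fin n} (hab : a ≠ b) : ∃ j, CrossAt n N C j a b := by
  by_contra h
  push_neg at h
  have hiff := noCross_lt a b m le_rfl (fun j _ => h j)
  have hw : statePerm n N C m = w0 n := ((isArr_iff_state N C).mp hC).2
  rw [hw] at hiff
  have ha : (w0 n a).1 = n - (a.1 + 1) := rfl
  have hb : (w0 n b).1 = n - (b.1 + 1) := rfl
  rw [ha, hb] at hiff
  have hvn : a.1 ≠ b.1 := fun h' => hab (Fin.val_inj.mp h')
  have := a.2
  have := b.2
  omega

lemma cross_unique {N : Fin m → Fin (n - 1)} {C : Finset (Fin m)} (hC : IsArr n N C)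
    {j j' : Fin m} {a b : Fin n}
    (h : CrossAt n N C j a b) (h' : CrossAt n N C j' a b) : j = j' := by
  classical
  have hf : ∀ p ∈ C, ({pLow n N C p, pHigh n N C p} : Finset (Fin n)) ∈
      Finset.powersetCard 2 (univ : Finset (Fin n)) := by
    intro p hp
    rw [Finset.mem_powersetCard]
    exact ⟨Finset.subset_univ _, Finset.card_pair (pLow_ne_pHigh N C p)⟩
  have hsurj : ∀ S ∈ Finset.powersetCard 2 (univ : Finset (Fin n)),
      ∃ p, ∃ _ : p ∈ C, ({pLow n N C p, pHigh n N C p} : Finset (Fin n)) = S := by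
    intro S hS
    rw [Finset.mem_powersetCard] at hS
    obtain ⟨u, v, huv, rfl⟩ := Finset.card_eq_two.mp hS.2
    obtain ⟨p, hp⟩ := exists_cross hC huv
    refine ⟨p, hp.1, ?_⟩
    rcases hp.2 with ⟨h1, h2⟩ | ⟨h1, h2⟩
    · rw [h1, h2]
    · rw [h1, h2, Finset.pair_comm]
  have hcard : C.card ≤ (Finset.powersetCard 2 (univ : Finset (Fin n))).card := by
    rw [Finset.card_powersetCard, Finset.card_univ, Fintype.card_fin, hC.1]
  have heq : ({pLow n N C j, pHigh n N C j} : Finset (Fin n)) =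
      ({pLow n N C j', pHigh n N C j'} : Finset (Fin n)) := by
    rcases h.2 with ⟨h1, h2⟩ | ⟨h1, h2⟩ <;> rcases h'.2 with ⟨h1', h2'⟩ | ⟨h1', h2'⟩ <;>
      rw [h1, h2, h1', h2'] <;> exact Finset.pair_comm _ _
  exact Finset.inj_on_of_surj_on_of_card_le (fun p _ => {pLow n N C p, pHigh n N C p})
    hf hsurj hcard h.1 h'.1 heq

end Aux3
section Flip

variable {n m : ℕ} {N : Fin m → Fin (n - 1)} {C : Finset (Fin m)} {j j' : Fin m}

lemma swap_mul_state (N : Fin m → Fin (n - 1)) (C : Finset (Fin m)) (j : Fin m) :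
    Equiv.swap (lvlA n N j) (lvlB n N j) * statePerm n N C j.1 =
      statePerm n N C j.1 * Equiv.swap (pLow n N C j) (pHigh n N C j) := by
  rw [Equiv.swap_mul_eq_mul_swap]
  rfl

lemma flip_state (hjC : j ∉ C)
    (hx : CrossAt n N C j' (pLow n N C j) (pHigh n N C j)) (t : ℕ) :
    statePerm n N (insert j (C.erase j')) t =
      if (j.1 < t ∧ t ≤ j'.1) ∨ (j'.1 < t ∧ t ≤ j.1)
      then statePerm n N C t * Equiv.swap (pLow n N C j) (pHigh n N C j)
      else statePerm n N C t := by
  have hj'C : j' ∈ C := hx.1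
  have hjj' : j.1 ≠ j'.1 := fun h => hjC (by rw [show j = j' from Fin.ext h]; exact hj'C)
  induction t with
  | zero => rw [if_neg (by omega)]; rfl
  | succ t ih =>
    by_cases h1 : t = j.1
    · -- position j : contact in C, crossing in the flipped arrangement
      have hm : t < m := h1 ▸ j.2
      have hfin : (⟨t, hm⟩ : Fin m) = j := Fin.ext h1
      have hC1 : statePerm n N C (t + 1) = statePerm n N C t := by
        rw [statePerm_succ, dif_pos hm, hfin, if_neg hjC, one_mul]
      have hsw : Equiv.swap (lvlA n N j) (lvlB n N j) * statePerm n N C t =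
          statePerm n N C t * Equiv.swap (pLow n N C j) (pHigh n N C j) := by
        rw [show statePerm n N C t = statePerm n N C j.1 from by rw [h1]]
        exact swap_mul_state N C j
      rw [statePerm_succ, dif_pos hm, hfin,
        if_pos (Finset.mem_insert_self j (C.erase j')), adjT_eq_swap, ih]
      by_cases hord : j'.1 < t
      · rw [if_pos (Or.inr ⟨hord, by omega⟩), if_neg (by omega), hC1, ← mul_assoc, hsw,
          mul_assoc, Equiv.swap_mul_self, mul_one]
      · rw [if_neg (by omega), if_pos (Or.inl ⟨by omega, by omega⟩), hC1, hsw]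
    · by_cases h2 : t = j'.1
      · -- position j' : crossing in C, contact in the flipped arrangement
        have hm : t < m := h2 ▸ j'.2
        have hfin : (⟨t, hm⟩ : Fin m) = j' := Fin.ext h2
        have hnotC2 : j' ∉ insert j (C.erase j') := by
          simp only [Finset.mem_insert, Finset.mem_erase]
          push_neg
          exact ⟨fun h => hjj' (congrArg Fin.val h).symm, fun h => absurd rfl h⟩
        have hC1 : statePerm n N C (t + 1) =
            statePerm n N C t * Equiv.swap (pLow n N C j) (pHigh n N C j) := by
          rw [statePerm_succ, dif_pos hm, hfin, if_pos hj'C, adjT_eq_swap,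
            show statePerm n N C t = statePerm n N C j'.1 from by rw [h2],
            swap_mul_state N C j']
          congr 1
          rcases hx.2 with ⟨ha, hb⟩ | ⟨ha, hb⟩
          · rw [ha, hb]
          · rw [ha, hb, Equiv.swap_comm]
        rw [statePerm_succ, dif_pos hm, hfin, if_neg hnotC2, one_mul, ih]
        by_cases hord : j.1 < t
        · rw [if_pos (Or.inl ⟨hord, by omega⟩), if_neg (by omega), hC1]
        · rw [if_neg (by omega), if_pos (Or.inr ⟨by omega, by omega⟩), hC1, mul_assoc,
            Equiv.swap_mul_self, mul_one]
      · -- generic position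
        have hG : (if h : t < m then
              (if (⟨t, h⟩ : Fin m) ∈ insert j (C.erase j') then adjT n (N ⟨t, h⟩) else 1) else 1) =
            (if h : t < m then (if (⟨t, h⟩ : Fin m) ∈ C then adjT n (N ⟨t, h⟩) else 1) else 1) := by
          rcases Nat.lt_or_ge t m with hm | hm
          · have hne1 : (⟨t, hm⟩ : Fin m) ≠ j := fun h => h1 (congrArg Fin.val h)
            have hne2 : (⟨t, hm⟩ : Fin m) ≠ j' := fun h => h2 (congrArg Fin.val h)
            have hiff : ((⟨t, hm⟩ : Fin m) ∈ insert j (C.erase j')) ↔ (⟨t, hm⟩ : Fin m) ∈ C := by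
              simp [Finset.mem_insert, Finset.mem_erase, hne1, hne2]
            rw [dif_pos hm, dif_pos hm, if_congr hiff rfl rfl]
          · rw [dif_neg (by omega), dif_neg (by omega)]
        rw [statePerm_succ, statePerm_succ, hG, ih]
        by_cases hD : (j.1 < t ∧ t ≤ j'.1) ∨ (j'.1 < t ∧ t ≤ j.1)
        · rw [if_pos hD, if_pos (by omega), ← mul_assoc]
        · rw [if_neg hD, if_neg (by omega)]

lemma flip_isArr (hC : IsArr n N C) (hjC : j ∉ C)
    (hx : CrossAt n N C j' (pLow n N C j) (pHigh n N C j)) :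
    IsArr n N (insert j (C.erase j')) := by
  rw [isArr_iff_state] at hC ⊢
  constructor
  · rw [Finset.card_insert_of_notMem (by simp [Finset.mem_erase, hjC]),
      Finset.card_erase_of_mem hx.1]
    have : 0 < C.card := Finset.card_pos.mpr ⟨j', hx.1⟩
    omega
  · rw [flip_state hjC hx m, if_neg (by have := j.2; have := j'.2; omega)]
    exact hC.2

end Flip
section Conn

variable {n m : ℕ} {N : Fin m → Fin (n - 1)} {C : Finset (Fin m)} {j j' : Fin m}

lemma connRel_symm {u v : Fin n} (h : ConnRel n N C u v) : ConnRel n N C v u :=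
  haveI : Std.Symm (fun u v => ArcRel n N C u v ∨ ArcRel n N C v u) := ⟨fun _ _ hxy => hxy.symm⟩
  Relation.ReflTransGen.symmetric.symm _ _ h

lemma connRel_of_arc {u v : Fin n} (h : ArcRel n N C u v) : ConnRel n N C u v :=
  Relation.ReflTransGen.single (Or.inl h)

lemma connRel_trans {u v w : Fin n} (h1 : ConnRel n N C u v) (h2 : ConnRel n N C v w) :
    ConnRel n N C u w :=
  Relation.ReflTransGen.trans h1 h2

lemma arc_of_contact (hj : j ∉ C) : ArcRel n N C (pHigh n N C j) (pLow n N C j) := by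
  refine ⟨j, hj, ?_, ?_⟩
  · unfold arcSrc
    rw [statePerm_succ_of_not_mem hj]
    rfl
  · unfold arcTgt
    rw [statePerm_succ_of_not_mem hj]
    rfl

lemma conn_ab (hj : j ∉ C) : ConnRel n N C (pLow n N C j) (pHigh n N C j) :=
  connRel_symm (connRel_of_arc (arc_of_contact hj))

lemma conn_tau (hj : j ∉ C) (x : Fin n) :
    ConnRel n N C x (Equiv.swap (pLow n N C j) (pHigh n N C j) x) := by
  by_cases hx1 : x = pLow n N C j
  · subst hx1; rw [Equiv.swap_apply_left]; exact conn_ab hj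
  by_cases hx2 : x = pHigh n N C j
  · subst hx2; rw [Equiv.swap_apply_right]; exact connRel_symm (conn_ab hj)
  · rw [Equiv.swap_apply_of_ne_of_ne hx1 hx2]
    exact Relation.ReflTransGen.refl

lemma conn_in_ab (hj : j ∉ C) {u v : Fin n}
    (hu : u = pLow n N C j ∨ u = pHigh n N C j)
    (hv : v = pLow n N C j ∨ v = pHigh n N C j) : ConnRel n N C u v := by
  rcases hu with rfl | rfl <;> rcases hv with rfl | rfl
  · exact Relation.ReflTransGen.refl
  · exact conn_ab hj
  · exact connRel_symm (conn_ab hj)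
  · exact Relation.ReflTransGen.refl

lemma flip_arc (hjC : j ∉ C)
    (hx : CrossAt n N C j' (pLow n N C j) (pHigh n N C j))
    {u v : Fin n} (h : ArcRel n N (insert j (C.erase j')) u v) : ConnRel n N C u v := by
  have hj'C : j' ∈ C := hx.1
  have hjj' : j.1 ≠ j'.1 := fun hh => hjC (by rw [show j = j' from Fin.ext hh]; exact hj'C)
  obtain ⟨p, hp, hsrc, htgt⟩ := h
  have hpj : p ≠ j := fun hh => hp (by rw [hh]; exact Finset.mem_insert_self j _)
  have hcrossstate : statePerm n N C (j'.1 + 1) =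
      Equiv.swap (lvlA n N j') (lvlB n N j') * statePerm n N C j'.1 :=
    statePerm_succ_of_mem hj'C
  have hsrcC : (statePerm n N C (j'.1 + 1))⁻¹ (lvlB n N j') = pLow n N C j' := by
    rw [hcrossstate, mul_inv_rev, Equiv.Perm.mul_apply, Equiv.swap_inv, Equiv.swap_apply_right]
    rfl
  have htgtC : (statePerm n N C (j'.1 + 1))⁻¹ (lvlA n N j') = pHigh n N C j' := by
    rw [hcrossstate, mul_inv_rev, Equiv.Perm.mul_apply, Equiv.swap_inv, Equiv.swap_apply_left]
    rfl
  by_cases hpj' : p = j'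
  · subst hpj'
    -- the new contact lies between the pseudolines of the old contact
    have hu : u = (statePerm n N (insert j (C.erase p)) (p.1 + 1))⁻¹ (lvlB n N p) := hsrc.symm
    have hv : v = (statePerm n N (insert j (C.erase p)) (p.1 + 1))⁻¹ (lvlA n N p) := htgt.symm
    rw [flip_state hjC hx (p.1 + 1)] at hu hv
    by_cases hord : p.1 < j.1
    · rw [if_pos (Or.inr ⟨by omega, by omega⟩)] at hu hv
      rw [mul_inv_rev, Equiv.Perm.mul_apply, Equiv.swap_inv] at hu hv
      rw [hsrcC] at hu
      rw [htgtC] at hv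
      refine conn_in_ab hjC ?_ ?_
      · rcases hx.2 with ⟨h1, h2⟩ | ⟨h1, h2⟩
        · rw [hu, h1, Equiv.swap_apply_left]; exact Or.inr rfl
        · rw [hu, h1, Equiv.swap_apply_right]; exact Or.inl rfl
      · rcases hx.2 with ⟨h1, h2⟩ | ⟨h1, h2⟩
        · rw [hv, h2, Equiv.swap_apply_right]; exact Or.inl rfl
        · rw [hv, h2, Equiv.swap_apply_left]; exact Or.inr rfl
    · rw [if_neg (by omega)] at hu hv
      rw [hsrcC] at hu
      rw [htgtC] at hv
      refine conn_in_ab hjC ?_ ?_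
      · rcases hx.2 with ⟨h1, h2⟩ | ⟨h1, h2⟩
        · exact Or.inl (hu.trans h1)
        · exact Or.inr (hu.trans h1)
      · rcases hx.2 with ⟨h1, h2⟩ | ⟨h1, h2⟩
        · exact Or.inr (hv.trans h2)
        · exact Or.inl (hv.trans h2)
  · have hpC : p ∉ C := by
      intro hmem
      exact hp (Finset.mem_insert_of_mem (Finset.mem_erase.mpr ⟨hpj', hmem⟩))
    have harc : ArcRel n N C (arcSrc n N C p) (arcTgt n N C p) := ⟨p, hpC, rfl, rfl⟩
    have hu : u = (statePerm n N (insert j (C.erase j')) (p.1 + 1))⁻¹ (lvlB n N p) := hsrc.symm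
    have hv : v = (statePerm n N (insert j (C.erase j')) (p.1 + 1))⁻¹ (lvlA n N p) := htgt.symm
    rw [flip_state hjC hx (p.1 + 1)] at hu hv
    by_cases hD : (j.1 < p.1 + 1 ∧ p.1 + 1 ≤ j'.1) ∨ (j'.1 < p.1 + 1 ∧ p.1 + 1 ≤ j.1)
    · rw [if_pos hD, mul_inv_rev, Equiv.Perm.mul_apply, Equiv.swap_inv] at hu hv
      have hu' : u = Equiv.swap (pLow n N C j) (pHigh n N C j) (arcSrc n N C p) := hu
      have hv' : v = Equiv.swap (pLow n N C j) (pHigh n N C j) (arcTgt n N C p) := hv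
      have c1 : ConnRel n N C u (arcSrc n N C p) := by
        rw [hu']; exact connRel_symm (conn_tau hjC _)
      have c3 : ConnRel n N C (arcTgt n N C p) v := by
        rw [hv']; exact conn_tau hjC _
      exact Relation.ReflTransGen.trans
        (Relation.ReflTransGen.trans c1 (connRel_of_arc harc)) c3
    · rw [if_neg hD] at hu hv
      rw [hu, hv]
      exact connRel_of_arc harc

end Conn
section Main

variable {n m : ℕ} {N : Fin m → Fin (n - 1)} {C : Finset (Fin m)} {j j' : Fin m}

lemma flip_conn_le (hjC : j ∉ C)
    (hx : CrossAt n N C j' (pLow n N C j) (pHigh n N C j)) :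
    ∀ u v, ConnRel n N (insert j (C.erase j')) u v → ConnRel n N C u v := by
  intro u v h
  have h2 : Relation.ReflTransGen (fun a b => ArcRel n N (insert j (C.erase j')) a b ∨
      ArcRel n N (insert j (C.erase j')) b a) u v := h
  clear h
  induction h2 with
  | refl => exact Relation.ReflTransGen.refl
  | tail _ hstep ih =>
    rcases hstep with h' | h'
    · exact connRel_trans ih (flip_arc hjC hx h')
    · exact connRel_trans ih (connRel_symm (flip_arc hjC hx h'))

lemma flip_conn_ge (hjC : j ∉ C)
    (hx : CrossAt n N C j' (pLow n N C j) (pHigh n N C j)) :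
    ∀ u v, ConnRel n N C u v → ConnRel n N (insert j (C.erase j')) u v := by
  have hj'C : j' ∈ C := hx.1
  have hjj' : j.1 ≠ j'.1 := fun hh => hjC (by rw [show j = j' from Fin.ext hh]; exact hj'C)
  have hj'notC₂ : j' ∉ insert j (C.erase j') := by
    simp only [Finset.mem_insert, Finset.mem_erase]
    push_neg
    exact ⟨fun h => hjj' (congrArg Fin.val h).symm, fun h => absurd rfl h⟩
  have hjC₂ : j ∈ insert j (C.erase j') := Finset.mem_insert_self _ _
  have hsj : statePerm n N (insert j (C.erase j')) j.1 =
      if j'.1 < j.1 then statePerm n N C j.1 * Equiv.swap (pLow n N C j) (pHigh n N C j)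
      else statePerm n N C j.1 := by
    rw [flip_state hjC hx j.1]
    by_cases hord : j'.1 < j.1
    · rw [if_pos (Or.inr ⟨hord, le_rfl⟩), if_pos hord]
    · rw [if_neg (by omega), if_neg hord]
  have hsj' : statePerm n N (insert j (C.erase j')) j'.1 =
      if j.1 < j'.1 then statePerm n N C j'.1 * Equiv.swap (pLow n N C j) (pHigh n N C j)
      else statePerm n N C j'.1 := by
    rw [flip_state hjC hx j'.1]
    by_cases hord : j.1 < j'.1
    · rw [if_pos (Or.inl ⟨hord, le_rfl⟩), if_pos hord]
    · rw [if_neg (by omega), if_neg hord]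
  have htw : ∀ (σ : Equiv.Perm (Fin n)) (x : Fin n),
      (σ * Equiv.swap (pLow n N C j) (pHigh n N C j))⁻¹ x =
        Equiv.swap (pLow n N C j) (pHigh n N C j) (σ⁻¹ x) := by
    intro σ x
    rw [mul_inv_rev, Equiv.Perm.mul_apply, Equiv.swap_inv]
  have hx₂ : CrossAt n N (insert j (C.erase j')) j
      (pLow n N (insert j (C.erase j')) j') (pHigh n N (insert j (C.erase j')) j') := by
    refine ⟨hjC₂, ?_⟩
    by_cases hord : j.1 < j'.1
    · have EL0 : pLow n N (insert j (C.erase j')) j = pLow n N C j := by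
        rw [pLow_def, hsj, if_neg (by omega), ← pLow_def]
      have EH0 : pHigh n N (insert j (C.erase j')) j = pHigh n N C j := by
        rw [pHigh_def, hsj, if_neg (by omega), ← pHigh_def]
      have EL : pLow n N (insert j (C.erase j')) j' =
          Equiv.swap (pLow n N C j) (pHigh n N C j) (pLow n N C j') := by
        rw [pLow_def, hsj', if_pos hord, htw, ← pLow_def]
      have EH : pHigh n N (insert j (C.erase j')) j' =
          Equiv.swap (pLow n N C j) (pHigh n N C j) (pHigh n N C j') := by
        rw [pHigh_def, hsj', if_pos hord, htw, ← pHigh_def]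
      rcases hx.2 with ⟨h1, h2⟩ | ⟨h1, h2⟩
      · right
        constructor
        · rw [EL0, EH, h2, Equiv.swap_apply_right]
        · rw [EH0, EL, h1, Equiv.swap_apply_left]
      · left
        constructor
        · rw [EL0, EL, h1, Equiv.swap_apply_right]
        · rw [EH0, EH, h2, Equiv.swap_apply_left]
    · have hord' : j'.1 < j.1 := by omega
      have EL0 : pLow n N (insert j (C.erase j')) j =
          Equiv.swap (pLow n N C j) (pHigh n N C j) (pLow n N C j) := by
        rw [pLow_def, hsj, if_pos hord', htw, ← pLow_def]
      have EH0 : pHigh n N (insert j (C.erase j')) j =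
          Equiv.swap (pLow n N C j) (pHigh n N C j) (pHigh n N C j) := by
        rw [pHigh_def, hsj, if_pos hord', htw, ← pHigh_def]
      have EL : pLow n N (insert j (C.erase j')) j' = pLow n N C j' := by
        rw [pLow_def, hsj', if_neg (by omega), ← pLow_def]
      have EH : pHigh n N (insert j (C.erase j')) j' = pHigh n N C j' := by
        rw [pHigh_def, hsj', if_neg (by omega), ← pHigh_def]
      rcases hx.2 with ⟨h1, h2⟩ | ⟨h1, h2⟩
      · right
        constructor
        · rw [EL0, Equiv.swap_apply_left, EH, h2]
        · rw [EH0, Equiv.swap_apply_right, EL, h1]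
      · left
        constructor
        · rw [EL0, Equiv.swap_apply_left, EL, h1]
        · rw [EH0, Equiv.swap_apply_right, EH, h2]
  have hback : insert j' ((insert j (C.erase j')).erase j) = C := by
    have hne : j ≠ j' := fun h => hjj' (congrArg Fin.val h)
    ext p
    by_cases e1 : p = j <;> by_cases e2 : p = j' <;>
      simp [e1, e2, Finset.mem_insert, Finset.mem_erase, hjC, hj'C, hne, Ne.symm hne]
  intro u v h
  have hle := flip_conn_le (C := insert j (C.erase j')) (j := j') (j' := j) hj'notC₂ hx₂ u v
  rw [hback] at hle
  exact hle h

lemma improve (t : ℕ) (hC : IsArr n N C) {C' : Finset (Fin m)} (hC' : IsArr n N C')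
    (hagree : ∀ p : Fin m, p.1 + t + 1 < m → (p ∈ C ↔ p ∈ C'))
    {j₀ : Fin m} (hj0 : j₀.1 + t + 1 = m) (hj0C : j₀ ∉ C) (hj0C' : j₀ ∈ C') :
    ∃ C₂, IsArr n N C₂ ∧ (∀ p : Fin m, p.1 + t < m → (p ∈ C₂ ↔ p ∈ C')) ∧
      (∀ u v, ConnRel n N C u v ↔ ConnRel n N C₂ u v) := by
  obtain ⟨j', hj'⟩ := exists_cross hC (pLow_ne_pHigh N C j₀)
  have hstateeq : ∀ s, s ≤ j₀.1 → statePerm n N C s = statePerm n N C' s := fun s hs =>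
    statePerm_congr _ _ s (fun p hp => hagree p (by omega))
  have hlt : j₀.1 < j'.1 := by
    by_contra hle
    push_neg at hle
    have hne : j' ≠ j₀ := fun h => hj0C (h ▸ hj'.1)
    have hlt' : j'.1 < j₀.1 := lt_of_le_of_ne hle (fun h => hne (Fin.ext h))
    have e1 : pLow n N C' j' = pLow n N C j' := by
      rw [pLow_def, pLow_def, hstateeq j'.1 (by omega)]
    have e2 : pHigh n N C' j' = pHigh n N C j' := by
      rw [pHigh_def, pHigh_def, hstateeq j'.1 (by omega)]
    have hx' : CrossAt n N C' j' (pLow n N C j₀) (pHigh n N C j₀) := by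
      refine ⟨(hagree j' (by omega)).mp hj'.1, ?_⟩
      rcases hj'.2 with ⟨h1, h2⟩ | ⟨h1, h2⟩
      · exact Or.inl ⟨e1.trans h1, e2.trans h2⟩
      · exact Or.inr ⟨e1.trans h1, e2.trans h2⟩
    have hx0 : CrossAt n N C' j₀ (pLow n N C j₀) (pHigh n N C j₀) := by
      refine ⟨hj0C', Or.inl ⟨?_, ?_⟩⟩
      · rw [pLow_def, pLow_def, hstateeq j₀.1 le_rfl]
      · rw [pHigh_def, pHigh_def, hstateeq j₀.1 le_rfl]
    exact hne (cross_unique hC' hx' hx0)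
  refine ⟨insert j₀ (C.erase j'), flip_isArr hC hj0C hj', ?_, fun u v =>
    ⟨fun h => flip_conn_ge hj0C hj' u v h, fun h => flip_conn_le hj0C hj' u v h⟩⟩
  intro p hp
  by_cases hpj0 : p = j₀
  · subst hpj0
    exact iff_of_true (Finset.mem_insert_self _ _) hj0C'
  · have hplt : p.1 < j₀.1 := by
      have : p.1 ≠ j₀.1 := fun h => hpj0 (Fin.ext h)
      omega
    have hpj' : p ≠ j' := fun h => by
      rw [h] at hplt; omega
    rw [show (p ∈ insert j₀ (C.erase j')) ↔ p ∈ C from by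
      simp [Finset.mem_insert, Finset.mem_erase, hpj0, hpj']]
    exact hagree p (by omega)

lemma main_aux (N : Fin m → Fin (n - 1)) : ∀ t (C C' : Finset (Fin m)),
    IsArr n N C → IsArr n N C' →
    (∀ p : Fin m, p.1 + t < m → (p ∈ C ↔ p ∈ C')) →
    ∀ u v : Fin n, ConnRel n N C u v ↔ ConnRel n N C' u v := by
  intro t
  induction t with
  | zero =>
    intro C C' _ _ h u v
    have hCC : C = C' := Finset.ext (fun p => h p (by have := p.2; omega))
    rw [hCC]
  | succ t ih =>
    intro C C' hC hC' h u v
    by_cases hall : ∀ p : Fin m, p.1 + t < m → (p ∈ C ↔ p ∈ C')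
    · exact ih C C' hC hC' hall u v
    · push_neg at hall
      obtain ⟨j₀, hj₀m, hj₀ne⟩ := hall
      have hj0 : j₀.1 + t + 1 = m := by
        by_contra h'
        have hiff := h j₀ (by omega)
        rcases hj₀ne with ⟨h1, h2⟩ | ⟨h1, h2⟩ <;> tauto
      rcases hj₀ne with ⟨hmem, hmem'⟩ | ⟨hmem, hmem'⟩
      · obtain ⟨C₂, hC₂, hag, hconn⟩ :=
          improve t hC' hC (fun p hp => (h p (by omega)).symm) hj0 hmem' hmem
        have h1 := ih C C₂ hC hC₂ (fun p hp => (hag p hp).symm) u v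
        exact h1.trans (hconn u v).symm
      · obtain ⟨C₂, hC₂, hag, hconn⟩ :=
          improve t hC hC' (fun p hp => h p (by omega)) hj0 hmem hmem'
        exact (hconn u v).trans (ih C₂ C' hC₂ hC' hag u v)

end Main

/-- Let `N` be a sorting network with `n` levels.  The contact graphs of all
pseudoline arrangements supported by `N` induce the same partition of the vertex set
`{1,…,n}` into connected components. -/
theorem contactGraph_components_eq (n m : ℕ) (N : Fin m → Fin (n - 1))
    (C C' : Finset (Fin m)) (hC : IsArr n N C) (hC' : IsArr n N C') :
    ∀ a b : Fin n, ConnRel n N C a b ↔ ConnRel n N C' a b := by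
  intro a b
  exact main_aux N m C C' hC hC' (fun p hp => absurd hp (by omega)) a b

end BrickP
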